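/- For every integer A ≥ 2 and positive reals α₁, …, α_A with Ā = Σᵢ αᵢ, the integral over T_A of (−Σᵢ₌₁^A πᵢ(x) log πᵢ(x)) · ∏ⱼ₌₁^A πⱼ(x)^{αⱼ−1} with respect to Lebesgue measure on ℝ^{A−1} equals (∏ⱼ Γ(αⱼ) / Γ(Ā)) · ( ψ₀(Ā+1) − Σᵢ (αᵢ/Ā) ψ₀(αᵢ+1) ). Equivalently, the mean entropy of a Dirichlet(α₁,…,α_A) random vector is ψ₀(Ā+1) − Σᵢ (αᵢ/Ā) ψ₀(αᵢ+1). -/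

import Mathlib

open MeasureTheory Real Finset Set
open scoped ENNReal NNReal

/-- The digamma function `ψ₀(x) = d/dx log Γ(x)`. -/
noncomputable def digamma (x : ℝ) : ℝ := deriv (fun y => Real.log (Real.Gamma y)) x

/-- The simplex coordinates: for `x ∈ ℝ^{A−1}`, `π i x = x i` for `i < A − 1` and
`π (A-1) x = 1 − ∑ x j`. -/
noncomputable def simplexCoord (A : ℕ) (x : Fin (A - 1) → ℝ) (i : Fin A) : ℝ :=
  if h : (i : ℕ) < A - 1 then x ⟨i, h⟩ else 1 - ∑ j, x j

/-- The open solid simplex `T_A = {x ∈ ℝ^{A−1} : xᵢ ≥ 0, ∑ xᵢ ≤ 1}`. -/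
def solidSimplex (A : ℕ) : Set (Fin (A - 1) → ℝ) :=
  {x | (∀ i, 0 ≤ x i) ∧ ∑ i, x i ≤ 1}

/-- Mean entropy of a Dirichlet random vector: for `A ≥ 2` and `α i > 0` with `Ā = ∑ αᵢ`,
`∫_{T_A} (−∑ᵢ πᵢ log πᵢ) ∏ⱼ πⱼ^{αⱼ−1} dx
  = (∏ⱼ Γ(αⱼ)/Γ(Ā)) (ψ₀(Ā+1) − ∑ᵢ (αᵢ/Ā) ψ₀(αᵢ+1))`. -/


lemma cplx_eq_real_beta {a b : ℝ} :
    Set.EqOn (fun x : ℝ => (x : ℂ) ^ ((a:ℂ) - 1) * (1 - (x : ℂ)) ^ ((b:ℂ) - 1))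
      (fun x : ℝ => ((x ^ (a - 1) * (1 - x) ^ (b - 1) : ℝ) : ℂ)) (Set.uIcc (0:ℝ) 1) := by
  intro x hx
  rw [Set.uIcc_of_le (by norm_num : (0:ℝ) ≤ 1)] at hx
  simp only
  rw [Complex.ofReal_mul, Complex.ofReal_cpow hx.1, Complex.ofReal_cpow (by linarith [hx.2])]
  push_cast
  ring

lemma real_beta_intervalIntegrable {a b : ℝ} (ha : 0 < a) (hb : 0 < b) :
    IntervalIntegrable (fun x : ℝ => x ^ (a - 1) * (1 - x) ^ (b - 1)) volume 0 1 := by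
  have h := Complex.betaIntegral_convergent (u := (a:ℂ)) (v := (b:ℂ)) (by simpa) (by simpa)
  have h2 : IntervalIntegrable (fun x : ℝ =>
      ((x ^ (a - 1) * (1 - x) ^ (b - 1) : ℝ) : ℂ)) volume 0 1 :=
    h.congr (fun x hx => cplx_eq_real_beta (uIoc_subset_uIcc hx))
  have h3 := h2.norm
  refine h3.mono_fun ?_ ?_
  · apply Measurable.aestronglyMeasurable
    fun_prop
  · refine Filter.Eventually.of_forall fun x => ?_
    simp [Complex.norm_real]

lemma real_beta_integral {a b : ℝ} (ha : 0 < a) (hb : 0 < b) :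
    ∫ x in (0:ℝ)..1, x ^ (a - 1) * (1 - x) ^ (b - 1)
      = Real.Gamma a * Real.Gamma b / Real.Gamma (a + b) := by
  have hab : (0:ℝ) < a + b := by linarith
  have hG := Complex.Gamma_mul_Gamma_eq_betaIntegral
    (s := (a:ℂ)) (t := (b:ℂ)) (by simpa) (by simpa)
  have hbeta : Complex.betaIntegral (a:ℂ) (b:ℂ)
      = ((∫ x in (0:ℝ)..1, x ^ (a - 1) * (1 - x) ^ (b - 1) : ℝ) : ℂ) := by
    rw [Complex.betaIntegral, intervalIntegral.integral_congr cplx_eq_real_beta]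
    exact intervalIntegral.integral_ofReal
  have hGne : Complex.Gamma ((a:ℂ) + (b:ℂ)) ≠ 0 := by
    rw [show ((a:ℂ) + b) = ((a + b : ℝ) : ℂ) by push_cast; ring, Complex.Gamma_ofReal]
    exact_mod_cast (Real.Gamma_pos_of_pos hab).ne'
  have key : ((∫ x in (0:ℝ)..1, x ^ (a - 1) * (1 - x) ^ (b - 1) : ℝ) : ℂ)
      = ((Real.Gamma a * Real.Gamma b / Real.Gamma (a + b) : ℝ) : ℂ) := by
    rw [← hbeta]
    have h1 : Complex.betaIntegral (a:ℂ) (b:ℂ)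
        = Complex.Gamma a * Complex.Gamma b / Complex.Gamma ((a:ℂ) + b) :=
      (eq_div_iff hGne).mpr (by rw [hG]; ring)
    rw [h1, Complex.ofReal_div, Complex.ofReal_mul,
      show ((a:ℂ) + b) = ((a + b : ℝ) : ℂ) by push_cast; ring,
      Complex.Gamma_ofReal, Complex.Gamma_ofReal, Complex.Gamma_ofReal]
  exact_mod_cast key

lemma beta_lintegral_one {a b : ℝ} (ha : 0 < a) (hb : 0 < b) :
    ∫⁻ x in Set.Ioo (0:ℝ) 1, ENNReal.ofReal (x ^ (a - 1) * (1 - x) ^ (b - 1))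
      = ENNReal.ofReal (Real.Gamma a * Real.Gamma b / Real.Gamma (a + b)) := by
  have hint : IntegrableOn (fun x : ℝ => x ^ (a - 1) * (1 - x) ^ (b - 1)) (Set.Ioc 0 1) :=
    (intervalIntegrable_iff_integrableOn_Ioc_of_le (by norm_num)).mp
      (real_beta_intervalIntegrable ha hb)
  have hnn : 0 ≤ᵐ[volume.restrict (Set.Ioc (0:ℝ) 1)]
      fun x : ℝ => x ^ (a - 1) * (1 - x) ^ (b - 1) := by
    refine (ae_restrict_iff' measurableSet_Ioc).mpr (Filter.Eventually.of_forall fun x hx => ?_)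
    exact mul_nonneg (Real.rpow_nonneg hx.1.le _) (Real.rpow_nonneg (by linarith [hx.2]) _)
  have h := ofReal_integral_eq_lintegral_ofReal hint hnn
  rw [Measure.restrict_congr_set Ioo_ae_eq_Ioc, ← h, ← intervalIntegral.integral_of_le
    (by norm_num : (0:ℝ) ≤ 1), real_beta_integral ha hb]

lemma beta_lintegral_scaled {a b c : ℝ} (ha : 0 < a) (hb : 0 < b) (hc : 0 < c) :
    ∫⁻ x in Set.Ioo (0:ℝ) c, ENNReal.ofReal (x ^ (a - 1) * (c - x) ^ (b - 1))
      = ENNReal.ofReal (c ^ (a + b - 1) * (Real.Gamma a * Real.Gamma b / Real.Gamma (a + b))) := by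
  set g : ℝ → ℝ≥0∞ := fun x => (Set.Ioo (0:ℝ) c).indicator
    (fun x => ENNReal.ofReal (x ^ (a - 1) * (c - x) ^ (b - 1))) x with hg
  have hgm : Measurable g := by
    apply Measurable.indicator _ measurableSet_Ioo
    fun_prop
  have h1 : ∫⁻ x in Set.Ioo (0:ℝ) c, ENNReal.ofReal (x ^ (a - 1) * (c - x) ^ (b - 1))
      = ∫⁻ x, g x := (lintegral_indicator measurableSet_Ioo _).symm
  have hmap := Real.map_volume_mul_left (ne_of_gt hc)
  have h2 : ∫⁻ y, g (c * y) = ENNReal.ofReal |c⁻¹| * ∫⁻ x, g x := by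
    rw [← lintegral_map hgm (measurable_const_mul c), hmap, lintegral_smul_measure, smul_eq_mul]
  have h3 : ∫⁻ x, g x = ENNReal.ofReal c * ∫⁻ y, g (c * y) := by
    rw [h2, ← mul_assoc, ← ENNReal.ofReal_mul hc.le, abs_of_pos (inv_pos.mpr hc),
      mul_inv_cancel₀ (ne_of_gt hc), ENNReal.ofReal_one, one_mul]
  have h4 : ∀ y : ℝ, g (c * y) = ENNReal.ofReal (c ^ (a + b - 2)) *
      (Set.Ioo (0:ℝ) 1).indicator (fun y => ENNReal.ofReal (y ^ (a - 1) * (1 - y) ^ (b - 1))) y := by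
    intro y
    by_cases hy : y ∈ Set.Ioo (0:ℝ) 1
    · have hmem : c * y ∈ Set.Ioo 0 c := by
        constructor
        · exact mul_pos hc hy.1
        · nlinarith [hy.2, hc]
      simp only [hg]
      rw [Set.indicator_of_mem hmem, Set.indicator_of_mem hy]
      have e1 : (c * y) ^ (a - 1) = c ^ (a - 1) * y ^ (a - 1) :=
        Real.mul_rpow hc.le hy.1.le
      have e2 : (c - c * y) ^ (b - 1) = c ^ (b - 1) * (1 - y) ^ (b - 1) := by
        rw [show c - c * y = c * (1 - y) by ring]
        exact Real.mul_rpow hc.le (by linarith [hy.2])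
      rw [e1, e2, ← ENNReal.ofReal_mul (by positivity)]
      congr 1
      rw [show a + b - 2 = (a - 1) + (b - 1) by ring, Real.rpow_add hc]
      ring
    · have hmem : c * y ∉ Set.Ioo 0 c := by
        intro hmem
        apply hy
        constructor
        · nlinarith [hmem.1, hc]
        · nlinarith [hmem.2, hc]
      simp only [hg]
      rw [Set.indicator_of_notMem hmem, Set.indicator_of_notMem hy, mul_zero]
  rw [h1, h3]
  simp_rw [h4]
  rw [lintegral_const_mul _ (by apply Measurable.indicator _ measurableSet_Ioo; fun_prop),
    lintegral_indicator measurableSet_Ioo, beta_lintegral_one ha hb, ← mul_assoc,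
    ← ENNReal.ofReal_mul hc.le, ← ENNReal.ofReal_mul (by positivity)]
  congr 2
  rw [show a + b - 1 = 1 + (a + b - 2) by ring, Real.rpow_add hc, Real.rpow_one]

lemma sum_hyperplane_null (n : ℕ) (r : ℝ) :
    volume {y : Fin (n+1) → ℝ | ∑ i, y i = r} = 0 := by
  have hmS : MeasurableSet {y : Fin (n+1) → ℝ | ∑ i, y i = r} :=
    measurableSet_eq_fun (by fun_prop) measurable_const
  have mp := (volume_preserving_piFinSuccAbove (fun _ : Fin (n+1) => ℝ) 0).symm
  rw [← mp.measure_preimage hmS.nullMeasurableSet]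
  have hpre : (MeasurableEquiv.piFinSuccAbove (fun _ : Fin (n+1) => ℝ) 0).symm ⁻¹'
      {y : Fin (n+1) → ℝ | ∑ i, y i = r}
      = {p : ℝ × (Fin n → ℝ) | p.1 + ∑ i, p.2 i = r} := by
    ext p
    simp only [Set.mem_preimage, Set.mem_setOf_eq, MeasurableEquiv.piFinSuccAbove,
      MeasurableEquiv.symm_mk, MeasurableEquiv.coe_mk, Equiv.symm_symm]
    rw [Fin.sum_univ_succAbove _ 0]
    simp [Fin.insertNth_apply_same, Fin.insertNth_apply_succAbove]
  rw [hpre]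
  have hmT : MeasurableSet {p : ℝ × (Fin n → ℝ) | p.1 + ∑ i, p.2 i = r} :=
    measurableSet_eq_fun (by fun_prop) measurable_const
  have : (volume : Measure (ℝ × (Fin n → ℝ)))
      = Measure.map Prod.swap ((volume : Measure (Fin n → ℝ)).prod (volume : Measure ℝ)) := by
    rw [Measure.prod_swap]; rfl
  rw [show (volume : Measure (ℝ × (Fin n → ℝ))) = (volume : Measure ℝ).prod volume from rfl,
    ← Measure.prod_swap, Measure.map_apply measurable_swap hmT]
  rw [Measure.measure_prod_null (measurable_swap hmT)]
  refine Filter.Eventually.of_forall fun y => ?_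
  have : (Prod.mk y ⁻¹' (Prod.swap ⁻¹' {p : ℝ × (Fin n → ℝ) | p.1 + ∑ i, p.2 i = r}))
      = {r - ∑ i, y i} := by
    ext u; simp [Prod.swap, eq_comm]; constructor <;> intro h <;> linarith
  simp only []
  rw [this]
  exact Real.volume_singleton




lemma sum_hyperplane_null' (n : ℕ) {r : ℝ} (hr : r ≠ 0) :
    volume {y : Fin n → ℝ | ∑ i, y i = r} = 0 := by
  cases n with
  | zero =>
    have h0 : {y : Fin 0 → ℝ | ∑ i, y i = r} = ∅ := by
      ext y; simpa using fun h => hr h.symm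
    rw [h0]; exact measure_empty
  | succ n => exact sum_hyperplane_null n r

lemma simplex_measurableSet (n : ℕ) :
    MeasurableSet {x : Fin n → ℝ | (∀ i, 0 ≤ x i) ∧ ∑ i, x i ≤ 1} := by
  have : {x : Fin n → ℝ | (∀ i, 0 ≤ x i) ∧ ∑ i, x i ≤ 1}
      = (⋂ i, {x : Fin n → ℝ | 0 ≤ x i}) ∩ {x | ∑ i, x i ≤ 1} := by
    ext x; simp [Set.mem_iInter, and_comm]
  rw [this]
  exact (MeasurableSet.iInter fun i =>
      measurableSet_le measurable_const (measurable_pi_apply i)).inter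
    (measurableSet_le (by fun_prop) measurable_const)

lemma dirichlet_lintegral (n : ℕ) : ∀ (a : Fin n → ℝ) (b : ℝ), (∀ i, 0 < a i) → 0 < b →
    ∫⁻ x in {x : Fin n → ℝ | (∀ i, 0 ≤ x i) ∧ ∑ i, x i ≤ 1},
      ENNReal.ofReal ((∏ i, x i ^ (a i - 1)) * (1 - ∑ i, x i) ^ (b - 1))
    = ENNReal.ofReal ((∏ i, Real.Gamma (a i)) * Real.Gamma b / Real.Gamma ((∑ i, a i) + b)) := by
  induction n with
  | zero =>
    intro a b ha hb
    have hset : {x : Fin 0 → ℝ | (∀ i, 0 ≤ x i) ∧ ∑ i, x i ≤ 1} = Set.univ := by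
      ext x; simp
    rw [hset, Measure.restrict_univ]
    simp only [Finset.univ_eq_empty, Finset.prod_empty, Finset.sum_empty, one_mul, sub_zero,
      Real.one_rpow, zero_add]
    rw [lintegral_const]
    have : (volume : Measure (Fin 0 → ℝ)) Set.univ = 1 := by
      rw [MeasureTheory.volume_pi, Measure.pi_univ]; simp
    rw [this, mul_one, div_self (Real.Gamma_pos_of_pos hb).ne']
  | succ n IH =>
    intro a b ha hb
    set S := {x : Fin (n+1) → ℝ | (∀ i, 0 ≤ x i) ∧ ∑ i, x i ≤ 1} with hSdef
    set F : (Fin (n+1) → ℝ) → ℝ≥0∞ :=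
      fun x => ENNReal.ofReal ((∏ i, x i ^ (a i - 1)) * (1 - ∑ i, x i) ^ (b - 1)) with hFdef
    have hS : MeasurableSet S := simplex_measurableSet (n+1)
    have hF : Measurable F := by
      apply Measurable.ennreal_ofReal
      fun_prop
    set e := MeasurableEquiv.piFinSuccAbove (fun _ : Fin (n+1) => ℝ) 0 with he
    have mp : MeasurePreserving e.symm
        ((volume : Measure ℝ).prod (volume : Measure (Fin n → ℝ))) volume :=
      (volume_preserving_piFinSuccAbove (fun _ : Fin (n+1) => ℝ) 0).symm
    have hstep1 : ∫⁻ x in S, F x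
        = ∫⁻ p, S.indicator F (e.symm p)
            ∂((volume : Measure ℝ).prod (volume : Measure (Fin n → ℝ))) := by
      rw [← lintegral_indicator hS, ← mp.lintegral_comp (hF.indicator hS)]
    have hstep2 : ∫⁻ p, S.indicator F (e.symm p)
            ∂((volume : Measure ℝ).prod (volume : Measure (Fin n → ℝ)))
        = ∫⁻ y, ∫⁻ u, S.indicator F (e.symm (u, y)) ∂volume ∂volume :=
      lintegral_prod_symm _ ((hF.indicator hS).comp e.symm.measurable).aemeasurable
    -- the inner integral
    set B : ℝ := Real.Gamma (a 0) * Real.Gamma b / Real.Gamma (a 0 + b) with hB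
    set S' := {y : Fin n → ℝ | (∀ i, 0 ≤ y i) ∧ ∑ i, y i ≤ 1} with hS'def
    have hB0 : 0 < B := div_pos (mul_pos (Real.Gamma_pos_of_pos (ha 0))
      (Real.Gamma_pos_of_pos hb)) (Real.Gamma_pos_of_pos (by linarith [ha 0, hb]))
    set F' : (Fin n → ℝ) → ℝ≥0∞ := fun y => ENNReal.ofReal
      ((∏ i, y i ^ (a i.succ - 1)) * (1 - ∑ i, y i) ^ ((a 0 + b) - 1)) with hF'def
    have hesymm : ∀ (u : ℝ) (y : Fin n → ℝ), e.symm (u, y) = Fin.insertNth 0 u y := by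
      intro u y; rfl
    have key : ∀ y : Fin n → ℝ, (∑ i, y i ≠ 1) →
        (∫⁻ u, S.indicator F (e.symm (u, y)) ∂volume)
          = ENNReal.ofReal B * S'.indicator F' y := by
      intro y hy
      by_cases hyS : y ∈ S'
      · have hc : 0 < 1 - ∑ i, y i := by
          rcases lt_of_le_of_ne hyS.2 hy with h
          linarith
        -- membership rewriting
        have hmemb : ∀ u : ℝ, (e.symm (u, y) ∈ S) ↔ u ∈ Set.Icc 0 (1 - ∑ i, y i) := by
          intro u
          rw [hesymm]
          simp only [hSdef, Set.mem_setOf_eq, Set.mem_Icc]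
          rw [Fin.forall_iff_succAbove (0 : Fin (n+1)), Fin.sum_univ_succAbove _ 0]
          simp only [Fin.insertNth_apply_same, Fin.insertNth_apply_succAbove]
          constructor
          · rintro ⟨⟨h1, _⟩, h2⟩; exact ⟨h1, by linarith⟩
          · rintro ⟨h1, h2⟩; exact ⟨⟨h1, fun i => hyS.1 i⟩, by linarith⟩
        have hval : ∀ u : ℝ, F (e.symm (u, y))
            = ENNReal.ofReal ((u ^ (a 0 - 1) * ((1 - ∑ i, y i) - u) ^ (b - 1)) *
                ∏ i, y i ^ (a i.succ - 1)) := by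
          intro u
          rw [hesymm]
          simp only [hFdef]
          rw [Fin.prod_univ_succAbove _ 0, Fin.sum_univ_succAbove _ 0]
          simp only [Fin.insertNth_apply_same, Fin.insertNth_apply_succAbove]
          simp only [Fin.succAbove_zero]
          congr 1
          rw [show 1 - (u + ∑ i, y i) = (1 - ∑ i, y i) - u by ring]
          ring
        have : (fun u : ℝ => S.indicator F (e.symm (u, y)))
            = fun u => (Set.Icc (0:ℝ) (1 - ∑ i, y i)).indicator
                (fun u => ENNReal.ofReal ((u ^ (a 0 - 1) * ((1 - ∑ i, y i) - u) ^ (b - 1)) *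
                  ∏ i, y i ^ (a i.succ - 1))) u := by
          funext u
          by_cases hu : e.symm (u, y) ∈ S
          · rw [Set.indicator_of_mem hu, Set.indicator_of_mem ((hmemb u).mp hu), hval]
          · rw [Set.indicator_of_notMem hu,
              Set.indicator_of_notMem (fun hmem => hu ((hmemb u).mpr hmem))]
        rw [this, lintegral_indicator measurableSet_Icc]
        rw [Measure.restrict_congr_set Ioo_ae_eq_Icc.symm]
        have hPy : (0:ℝ) ≤ ∏ i, y i ^ (a i.succ - 1) :=
          Finset.prod_nonneg fun i _ => Real.rpow_nonneg (hyS.1 i) _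
        simp_rw [ENNReal.ofReal_mul' hPy]
        rw [lintegral_mul_const _ (by fun_prop), beta_lintegral_scaled (ha 0) hb hc]
        rw [Set.indicator_of_mem hyS]
        simp only [hF'def]
        rw [← ENNReal.ofReal_mul (mul_nonneg (Real.rpow_nonneg hc.le _) hB0.le)]
        rw [← ENNReal.ofReal_mul hB0.le]
        congr 1
        ring
      · -- y ∉ S' : inner integral is 0
        have hz : ∀ u : ℝ, S.indicator F (e.symm (u, y)) = 0 := by
          intro u
          apply Set.indicator_of_notMem
          rw [hesymm]
          intro hmem
          apply hyS
          obtain ⟨h1, h2⟩ := hmem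
          rw [Fin.forall_iff_succAbove (0 : Fin (n+1))] at h1
          rw [Fin.sum_univ_succAbove _ 0] at h2
          simp only [Fin.insertNth_apply_same, Fin.insertNth_apply_succAbove] at h1 h2
          exact ⟨fun i => h1.2 i, by linarith [h1.1]⟩
        simp_rw [hz]
        rw [lintegral_zero, Set.indicator_of_notMem hyS, mul_zero]
    -- use key a.e.
    have hae : (fun y : Fin n → ℝ => ∫⁻ u, S.indicator F (e.symm (u, y)) ∂volume)
        =ᵐ[volume] fun y => ENNReal.ofReal B * S'.indicator F' y := by
      have hnull : volume {y : Fin n → ℝ | ∑ i, y i = 1} = 0 :=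
        sum_hyperplane_null' n one_ne_zero
      refine Filter.eventuallyEq_of_mem (compl_mem_ae_iff.mpr hnull) fun y hy => ?_
      exact key y hy
    rw [hstep1, hstep2, lintegral_congr_ae hae, lintegral_const_mul _ (by
      exact (Measurable.ennreal_ofReal (by fun_prop)).indicator (simplex_measurableSet n))]
    rw [lintegral_indicator (simplex_measurableSet n)]
    rw [IH (fun i => a i.succ) (a 0 + b) (fun i => ha i.succ) (add_pos (ha 0) hb)]
    -- final algebra
    rw [← ENNReal.ofReal_mul hB0.le]
    congr 1
    have h1 : ∑ i : Fin (n+1), a i = a 0 + ∑ i : Fin n, a i.succ := Fin.sum_univ_succ a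
    have h2 : ∏ i : Fin (n+1), Real.Gamma (a i)
        = Real.Gamma (a 0) * ∏ i : Fin n, Real.Gamma (a i.succ) := Fin.prod_univ_succ _
    have hab : (0:ℝ) < a 0 + b := add_pos (ha 0) hb
    have hsum : (0:ℝ) < ∑ i : Fin n, a i.succ + (a 0 + b) := by
      have : (0:ℝ) ≤ ∑ i : Fin n, a i.succ := Finset.sum_nonneg fun i _ => (ha i.succ).le
      linarith
    rw [h1, h2, show (∑ i : Fin n, a i.succ) + (a 0 + b) = a 0 + ∑ i : Fin n, a i.succ + b by ring]
    rw [hB]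
    field_simp [(Real.Gamma_pos_of_pos hab).ne']




def mySimplex (n : ℕ) : Set (Fin n → ℝ) :=
  {x | (∀ i, 0 ≤ x i) ∧ ∑ i, x i ≤ 1}

section bridge
variable {n : ℕ}

lemma mem_solidSimplex_iff {x : Fin n → ℝ} :
    x ∈ solidSimplex (n+1) ↔ (∀ i : Fin n, 0 ≤ x i) ∧ ∑ i : Fin n, x i ≤ 1 := Iff.rfl

lemma simplexCoord_castSucc (x : Fin n → ℝ) (i : Fin n) :
    simplexCoord (n+1) x (Fin.castSucc i) = x i := by
  simp only [simplexCoord]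
  rw [dif_pos (by simpa using i.isLt)]
  exact congrArg x (Fin.ext (by simp))

lemma simplexCoord_last (x : Fin n → ℝ) :
    simplexCoord (n+1) x (Fin.last n) = 1 - ∑ j, x j := by
  simp only [simplexCoord]
  rw [dif_neg (by simp)]
  rfl

lemma prod_simplexCoord (x : Fin n → ℝ) (g : Fin (n+1) → ℝ) :
    ∏ j, simplexCoord (n+1) x j ^ g j
      = (∏ i, x i ^ g (Fin.castSucc i)) * (1 - ∑ i, x i) ^ g (Fin.last n) := by
  rw [Fin.prod_univ_castSucc]
  congr 1
  · exact Finset.prod_congr rfl fun i _ => by rw [simplexCoord_castSucc]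
  · rw [simplexCoord_last]

lemma measurable_simplexCoord (j : Fin (n+1)) :
    Measurable (fun x : Fin n → ℝ => simplexCoord (n+1) x j) := by
  induction j using Fin.lastCases with
  | last =>
    simp only [simplexCoord_last]
    fun_prop
  | cast i =>
    simp only [simplexCoord_castSucc]
    exact measurable_pi_apply i

lemma measurable_dirichlet_integrand (g : Fin (n+1) → ℝ) :
    Measurable (fun x : Fin n → ℝ => ∏ j, simplexCoord (n+1) x j ^ g j) := by
  apply Finset.measurable_prod
  intro j _
  have := measurable_simplexCoord (n := n) j
  fun_prop

lemma simplexCoord_nonneg {x : Fin n → ℝ} (hx : x ∈ mySimplex n) (j : Fin (n+1)) :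
    0 ≤ simplexCoord (n+1) x j := by
  obtain ⟨h1, h2⟩ := hx
  induction j using Fin.lastCases with
  | last =>
    rw [simplexCoord_last]
    linarith
  | cast i =>
    rw [simplexCoord_castSucc]
    exact h1 i

lemma simplexCoord_le_one {x : Fin n → ℝ} (hx : x ∈ mySimplex n) (j : Fin (n+1)) :
    simplexCoord (n+1) x j ≤ 1 := by
  obtain ⟨h1, h2⟩ := hx
  induction j using Fin.lastCases with
  | last =>
    rw [simplexCoord_last]
    have : 0 ≤ ∑ i : Fin n, x i := Finset.sum_nonneg fun i _ => h1 i
    linarith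
  | cast i =>
    rw [simplexCoord_castSucc]
    calc x i ≤ ∑ i : Fin n, x i := Finset.single_le_sum (fun i _ => h1 i) (Finset.mem_univ _)
    _ ≤ 1 := h2

lemma dirichlet_lintegral' (α : Fin (n+1) → ℝ) (hα : ∀ i, 0 < α i) :
    ∫⁻ x in mySimplex n,
        ENNReal.ofReal (∏ j, simplexCoord (n+1) x j ^ (α j - 1))
      = ENNReal.ofReal ((∏ j, Real.Gamma (α j)) / Real.Gamma (∑ j, α j)) := by
  have h := dirichlet_lintegral n (fun i => α (Fin.castSucc i)) (α (Fin.last n))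
    (fun i => hα _) (hα _)
  have heq : ∀ x : Fin n → ℝ, (∏ j, simplexCoord (n+1) x j ^ (α j - 1))
      = (∏ i : Fin n, x i ^ (α (Fin.castSucc i) - 1)) * (1 - ∑ i : Fin n, x i) ^ (α (Fin.last n) - 1) :=
    fun x => prod_simplexCoord x (fun j => α j - 1)
  show ∫⁻ x in {x : Fin n → ℝ | (∀ i, 0 ≤ x i) ∧ ∑ i, x i ≤ 1},
      ENNReal.ofReal (∏ j, simplexCoord (n+1) x j ^ (α j - 1)) = _
  simp_rw [heq]
  rw [h]
  congr 1
  rw [← Fin.prod_univ_castSucc (fun j => Real.Gamma (α j)),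
    ← Fin.sum_univ_castSucc (fun j => α j)]

lemma dirichlet_integrableOn (α : Fin (n+1) → ℝ) (hα : ∀ i, 0 < α i) :
    IntegrableOn (fun x : Fin n → ℝ => ∏ j, simplexCoord (n+1) x j ^ (α j - 1))
      (mySimplex n) := by
  have hS : MeasurableSet (mySimplex n) := simplex_measurableSet n
  constructor
  · exact (measurable_dirichlet_integrand _).aestronglyMeasurable
  · have hnn : 0 ≤ᵐ[volume.restrict (mySimplex n)]
        fun x : Fin n → ℝ => ∏ j, simplexCoord (n+1) x j ^ (α j - 1) := by
      refine (ae_restrict_iff' hS).mpr (Filter.Eventually.of_forall fun x hx => ?_)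
      exact Finset.prod_nonneg fun j _ => Real.rpow_nonneg (simplexCoord_nonneg hx j) _
    rw [hasFiniteIntegral_iff_ofReal hnn, dirichlet_lintegral' α hα]
    exact ENNReal.ofReal_lt_top

lemma dirichlet_integral (α : Fin (n+1) → ℝ) (hα : ∀ i, 0 < α i) :
    ∫ x in mySimplex n, ∏ j, simplexCoord (n+1) x j ^ (α j - 1)
      = (∏ j, Real.Gamma (α j)) / Real.Gamma (∑ j, α j) := by
  have hS : MeasurableSet (mySimplex n) := simplex_measurableSet n
  have hnn : 0 ≤ᵐ[volume.restrict (mySimplex n)]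
      fun x : Fin n → ℝ => ∏ j, simplexCoord (n+1) x j ^ (α j - 1) := by
    refine (ae_restrict_iff' hS).mpr (Filter.Eventually.of_forall fun x hx => ?_)
    exact Finset.prod_nonneg fun j _ => Real.rpow_nonneg (simplexCoord_nonneg hx j) _
  rw [integral_eq_lintegral_of_nonneg_ae hnn
    (measurable_dirichlet_integrand _).aestronglyMeasurable, dirichlet_lintegral' α hα,
    ENNReal.toReal_ofReal]
  have hsum : (0:ℝ) < Real.Gamma (∑ j, α j) :=
    Real.Gamma_pos_of_pos (Finset.sum_pos (fun j _ => hα j) Finset.univ_nonempty)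
  have hprod : (0:ℝ) ≤ ∏ j, Real.Gamma (α j) :=
    Finset.prod_nonneg fun j _ => (Real.Gamma_pos_of_pos (hα j)).le
  positivity

end bridge

lemma Gamma_pos_ne {x : ℝ} (hx : 0 < x) : ∀ m : ℕ, x ≠ -m := by
  intro m h
  have : (0:ℝ) ≤ m := Nat.cast_nonneg m
  rw [h] at hx
  linarith

lemma hasDerivAt_Gamma_digamma {x : ℝ} (hx : 0 < x) :
    HasDerivAt Real.Gamma (digamma x * Real.Gamma x) x := by
  have hd := (Real.differentiableAt_Gamma (Gamma_pos_ne hx)).hasDerivAt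
  have hΓ : 0 < Real.Gamma x := Real.Gamma_pos_of_pos hx
  have hlog : HasDerivAt (fun y => Real.log (Real.Gamma y))
      ((Real.Gamma x)⁻¹ * deriv Real.Gamma x) x :=
    (Real.hasDerivAt_log hΓ.ne').comp x hd
  have hdig : digamma x = (Real.Gamma x)⁻¹ * deriv Real.Gamma x := hlog.deriv
  have : digamma x * Real.Gamma x = deriv Real.Gamma x := by
    rw [hdig]; field_simp
  rw [this]
  exact hd

lemma rpow_mul_abs_log_le {x t : ℝ} (hx : 0 ≤ x) (hx1 : x ≤ 1) (ht : 0 < t) :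
    x ^ t * |Real.log x| ≤ 1 / t := by
  rcases eq_or_lt_of_le hx with h0 | h0
  · rw [← h0, Real.zero_rpow ht.ne', zero_mul]
    positivity
  · have hlog : Real.log x ≤ 0 := Real.log_nonpos h0.le hx1
    rw [abs_of_nonpos hlog]
    set y := x ^ t with hy
    have hy0 : 0 < y := Real.rpow_pos_of_pos h0 t
    have hlogy : Real.log y = t * Real.log x := Real.log_rpow h0 t
    have h2 : Real.log y⁻¹ ≤ y⁻¹ - 1 := Real.log_le_sub_one_of_pos (by positivity)
    rw [Real.log_inv] at h2
    have h3 : y * (-Real.log y) ≤ 1 - y := by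
      have := mul_le_mul_of_nonneg_left h2 hy0.le
      rw [mul_sub, mul_inv_cancel₀ hy0.ne'] at this
      linarith
    have h4 : x ^ t * (-Real.log x) = (1 / t) * (y * (-Real.log y)) := by
      rw [hlogy, ← hy]; field_simp
    rw [h4]
    calc (1/t) * (y * (-Real.log y)) ≤ (1/t) * 1 := by
          apply mul_le_mul_of_nonneg_left _ (by positivity)
          linarith [hy0]
    _ = 1/t := mul_one _

lemma hasDerivAt_rpow_exponent {c : ℝ} (hc : 0 < c) (s : ℝ) :
    HasDerivAt (fun s : ℝ => c ^ (s - 1)) (c ^ (s - 1) * Real.log c) s := by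
  have h := HasDerivAt.rpow (hasDerivAt_const s c) ((hasDerivAt_id s).sub_const 1) hc
  simpa using h

lemma dirichlet_entropy_term (n : ℕ) (α : Fin (n+1) → ℝ) (hα : ∀ i, 0 < α i) (i : Fin (n+1)) :
    IntegrableOn (fun x : Fin n → ℝ =>
        (simplexCoord (n+1) x i * Real.log (simplexCoord (n+1) x i)) *
          ∏ j, simplexCoord (n+1) x j ^ (α j - 1)) (mySimplex n)
    ∧ ∫ x in mySimplex n,
        (simplexCoord (n+1) x i * Real.log (simplexCoord (n+1) x i)) *
          ∏ j, simplexCoord (n+1) x j ^ (α j - 1)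
      = (Real.Gamma (α i + 1) * (∏ j ∈ Finset.univ.erase i, Real.Gamma (α j))
            / Real.Gamma ((∑ j, α j) + 1)) *
          (digamma (α i + 1) - digamma ((∑ j, α j) + 1)) := by
  classical
  set S' : Set (Fin n → ℝ) := mySimplex n with hS'
  set μ := volume.restrict S' with hμ
  have hS : MeasurableSet S' := simplex_measurableSet n
  set P : (Fin n → ℝ) → ℝ :=
    fun x => ∏ j ∈ Finset.univ.erase i, simplexCoord (n+1) x j ^ (α j - 1) with hPdef
  set F : ℝ → (Fin n → ℝ) → ℝ :=
    fun s x => simplexCoord (n+1) x i ^ (s - 1) * P x with hFdef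
  set F' : ℝ → (Fin n → ℝ) → ℝ :=
    fun s x => simplexCoord (n+1) x i ^ (s - 1) * Real.log (simplexCoord (n+1) x i) * P x
    with hF'def
  set C : ℝ := ∏ j ∈ Finset.univ.erase i, Real.Gamma (α j) with hCdef
  set t : ℝ := ∑ j ∈ Finset.univ.erase i, α j with htdef
  set s₀ : ℝ := α i + 1 with hs₀def
  have hπm : Measurable (fun x : Fin n → ℝ => simplexCoord (n+1) x i) :=
    measurable_simplexCoord i
  have hPm : Measurable P := by
    apply Finset.measurable_prod
    intro j _
    have := measurable_simplexCoord (n := n) j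
    fun_prop
  have ht0 : 0 ≤ t := Finset.sum_nonneg fun j _ => (hα j).le
  have hs₀pos : 0 < s₀ := by rw [hs₀def]; linarith [hα i]
  have hit : α i + t = ∑ j, α j := Finset.add_sum_erase Finset.univ α (Finset.mem_univ i)
  have hupd_pos : ∀ s : ℝ, 0 < s → ∀ j, 0 < Function.update α i s j := by
    intro s hs j
    rcases eq_or_ne j i with rfl | hj
    · rw [Function.update_self]; exact hs
    · rw [Function.update_of_ne hj]; exact hα j
  have hFeq : ∀ (s : ℝ) (x : Fin n → ℝ),
      (∏ j, simplexCoord (n+1) x j ^ (Function.update α i s j - 1)) = F s x := by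
    intro s x
    rw [← Finset.mul_prod_erase Finset.univ _ (Finset.mem_univ i)]
    simp only [Function.update_self, hFdef, hPdef]
    congr 1
    exact Finset.prod_congr rfl fun j hj => by
      rw [Function.update_of_ne (Finset.ne_of_mem_erase hj)]
  have hFint : ∀ s : ℝ, 0 < s → IntegrableOn (F s) S' := by
    intro s hs
    have := dirichlet_integrableOn (Function.update α i s) (hupd_pos s hs)
    rwa [show (fun x : Fin n → ℝ =>
        ∏ j, simplexCoord (n+1) x j ^ (Function.update α i s j - 1)) = F s
      from funext (hFeq s)] at this
  have hFval : ∀ s : ℝ, 0 < s →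
      ∫ x in S', F s x = Real.Gamma s * C / Real.Gamma (s + t) := by
    intro s hs
    have h := dirichlet_integral (Function.update α i s) (hupd_pos s hs)
    simp_rw [hFeq s] at h
    rw [hS']
    rw [h]
    congr 1
    · rw [← Finset.mul_prod_erase Finset.univ _ (Finset.mem_univ i), Function.update_self,
        hCdef]
      congr 1
      exact Finset.prod_congr rfl fun j hj => by
        rw [Function.update_of_ne (Finset.ne_of_mem_erase hj)]
    · congr 1
      rw [← Finset.add_sum_erase Finset.univ _ (Finset.mem_univ i), Function.update_self,
        htdef]
      congr 1
      exact Finset.sum_congr rfl fun j hj => by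
        rw [Function.update_of_ne (Finset.ne_of_mem_erase hj)]
  -- dominated convergence setup
  have hεpos : 0 < α i / 2 := by linarith [hα i]
  have hball : ∀ s ∈ Metric.ball s₀ (α i / 2), α i / 2 ≤ s - 1 ∧ 1 < s := by
    intro s hs
    rw [Metric.mem_ball, Real.dist_eq, abs_sub_lt_iff] at hs
    constructor <;> [linarith [hs.2]; linarith [hs.2, hα i]]
  have hP0 : ∀ x ∈ S', 0 ≤ P x := fun x hx =>
    Finset.prod_nonneg fun j _ => Real.rpow_nonneg (simplexCoord_nonneg hx j) _
  obtain ⟨hInt, hderiv⟩ := hasDerivAt_integral_of_dominated_loc_of_deriv_le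
    (F := F) (F' := F') (x₀ := s₀) (s := Metric.ball s₀ (α i / 2))
    (bound := fun x => (4 / α i) * (simplexCoord (n+1) x i ^ (α i / 4) * P x))
    (μ := μ) (Metric.ball_mem_nhds s₀ hεpos)
    (Filter.Eventually.of_forall fun s => by
      apply Measurable.aestronglyMeasurable
      simp only [hFdef]
      fun_prop)
    (by
      have := hFint s₀ hs₀pos
      exact this)
    (by
      have h1 : Measurable fun x : Fin n → ℝ => simplexCoord (n+1) x i ^ (s₀ - 1) := by
        fun_prop
      have h2 : Measurable fun x : Fin n → ℝ => Real.log (simplexCoord (n+1) x i) :=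
        Real.measurable_log.comp hπm
      exact ((h1.mul h2).mul hPm).aestronglyMeasurable)
    (by
      rw [hμ]
      refine (ae_restrict_iff' hS).mpr (Filter.Eventually.of_forall fun x hx => ?_)
      intro s hs
      obtain ⟨hs1, hs2⟩ := hball s hs
      have hc0 : 0 ≤ simplexCoord (n+1) x i := simplexCoord_nonneg hx i
      have hc1 : simplexCoord (n+1) x i ≤ 1 := simplexCoord_le_one hx i
      set c := simplexCoord (n+1) x i with hcdef
      have hnorm : ‖F' s x‖ = c ^ (s - 1) * |Real.log c| * P x := by
        simp only [hF'def, Real.norm_eq_abs, abs_mul]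
        rw [abs_of_nonneg (Real.rpow_nonneg hc0 _), abs_of_nonneg (hP0 x hx)]
      rw [hnorm]
      rcases eq_or_lt_of_le hc0 with h0 | h0
      · rw [← h0, Real.zero_rpow (by linarith : s - 1 ≠ 0), zero_mul, zero_mul]
        have h9 : (0:ℝ) ≤ 0 ^ (α i / 4) * P x :=
          mul_nonneg (Real.rpow_nonneg le_rfl _) (hP0 x hx)
        exact mul_nonneg (div_nonneg (by norm_num) (hα i).le) h9
      · have hb1 : c ^ (s-1) * |Real.log c| ≤ (4 / α i) * c ^ (α i / 4) := by
          calc c ^ (s-1) * |Real.log c| ≤ c ^ (α i / 2) * |Real.log c| :=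
              mul_le_mul_of_nonneg_right
                (Real.rpow_le_rpow_of_exponent_ge h0 hc1 hs1) (abs_nonneg _)
          _ = c ^ (α i / 4) * (c ^ (α i / 4) * |Real.log c|) := by
              rw [← mul_assoc, ← Real.rpow_add h0]
              ring_nf
          _ ≤ c ^ (α i / 4) * (1 / (α i / 4)) :=
              mul_le_mul_of_nonneg_left
                (rpow_mul_abs_log_le hc0 hc1 (by linarith [hα i]))
                (Real.rpow_nonneg hc0 _)
          _ = (4 / α i) * c ^ (α i / 4) := by
              rw [one_div_div, mul_comm]
        calc c ^ (s-1) * |Real.log c| * P x ≤ ((4 / α i) * c ^ (α i / 4)) * P x :=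
            mul_le_mul_of_nonneg_right hb1 (hP0 x hx)
        _ = (4 / α i) * (c ^ (α i / 4) * P x) := by ring)
    (by
      have hbint := dirichlet_integrableOn (Function.update α i (α i / 4 + 1))
        (hupd_pos _ (by linarith [hα i]))
      rw [show (fun x : Fin n → ℝ =>
          ∏ j, simplexCoord (n+1) x j ^ (Function.update α i (α i / 4 + 1) j - 1))
        = F (α i / 4 + 1) from funext (hFeq _)] at hbint
      have : F (α i / 4 + 1) = fun x => simplexCoord (n+1) x i ^ (α i / 4) * P x := by
        funext x
        simp only [hFdef]
        norm_num
      rw [this] at hbint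
      exact hbint.const_mul _)
    (by
      rw [hμ]
      refine (ae_restrict_iff' hS).mpr (Filter.Eventually.of_forall fun x hx => ?_)
      intro s hs
      obtain ⟨hs1, hs2⟩ := hball s hs
      have hc0 : 0 ≤ simplexCoord (n+1) x i := simplexCoord_nonneg hx i
      rcases eq_or_lt_of_le hc0 with h0 | h0
      · have hzero : F' s x = 0 := by
          simp only [hF'def, ← h0, Real.zero_rpow (by linarith : s - 1 ≠ 0)]
          ring
        rw [hzero]
        refine (hasDerivAt_const s (0:ℝ)).congr_of_eventuallyEq ?_
        filter_upwards [Ioi_mem_nhds hs2] with s' hs'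
        simp only [hFdef, ← h0,
          Real.zero_rpow (by simp only [Set.mem_Ioi] at hs'; intro h; linarith : s' - 1 ≠ 0)]
        ring
      · exact ((hasDerivAt_rpow_exponent h0 s).mul_const (P x))
    )
  -- identify the derivative
  have hstpos : 0 < s₀ + t := by linarith
  have hΓne : Real.Gamma (s₀ + t) ≠ 0 := (Real.Gamma_pos_of_pos hstpos).ne'
  have hG2 : HasDerivAt (fun s => Real.Gamma (s + t))
      (digamma (s₀ + t) * Real.Gamma (s₀ + t)) s₀ := by
    have := (hasDerivAt_Gamma_digamma hstpos).comp s₀ ((hasDerivAt_id s₀).add_const t)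
    simpa [Function.comp_def] using this
  have hGd := ((hasDerivAt_Gamma_digamma hs₀pos).mul_const C).div hG2 hΓne
  have hEv : (fun s => ∫ x in S', F s x)
      =ᶠ[nhds s₀] fun s => Real.Gamma s * C / Real.Gamma (s + t) := by
    filter_upwards [Ioi_mem_nhds hs₀pos] with s hs
    exact hFval s hs
  have hder2 : HasDerivAt (fun s => ∫ x in S', F s x)
      ((digamma s₀ * Real.Gamma s₀ * C * Real.Gamma (s₀ + t)
        - Real.Gamma s₀ * C * (digamma (s₀ + t) * Real.Gamma (s₀ + t)))
          / Real.Gamma (s₀ + t) ^ 2) s₀ :=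
    hGd.congr_of_eventuallyEq hEv
  have hder1 : HasDerivAt (fun s => ∫ x in S', F s x)
      (∫ x in S', F' s₀ x) s₀ := hderiv
  have huniq := hder1.unique hder2
  -- final form of the derivative
  have hval : ∫ x in S', F' s₀ x
      = (Real.Gamma s₀ * C / Real.Gamma (s₀ + t)) * (digamma s₀ - digamma (s₀ + t)) := by
    rw [huniq]
    field_simp
  -- identify F' s₀ with the entropy integrand on the simplex
  have hF'eq : ∀ x ∈ S', F' s₀ x
      = (simplexCoord (n+1) x i * Real.log (simplexCoord (n+1) x i)) *
          ∏ j, simplexCoord (n+1) x j ^ (α j - 1) := by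
    intro x hx
    have hc0 : 0 ≤ simplexCoord (n+1) x i := simplexCoord_nonneg hx i
    rw [← Finset.mul_prod_erase Finset.univ _ (Finset.mem_univ i)]
    simp only [hF'def, hPdef, hs₀def]
    rcases eq_or_lt_of_le hc0 with h0 | h0
    · rw [← h0, Real.zero_rpow (by linarith [hα i] : α i + 1 - 1 ≠ 0)]
      ring
    · rw [show α i + 1 - 1 = 1 + (α i - 1) by ring, Real.rpow_add h0, Real.rpow_one]
      ring
  have haeq : F' s₀ =ᵐ[μ] fun x =>
      (simplexCoord (n+1) x i * Real.log (simplexCoord (n+1) x i)) *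
        ∏ j, simplexCoord (n+1) x j ^ (α j - 1) := by
    rw [hμ]
    exact (ae_restrict_iff' hS).mpr (Filter.Eventually.of_forall hF'eq)
  constructor
  · exact hInt.congr haeq
  · refine Eq.trans (integral_congr_ae haeq).symm ?_
    refine Eq.trans hval ?_
    rw [hs₀def, show α i + 1 + t = (∑ j, α j) + 1 by rw [← hit]; ring]

theorem dirichlet_mean_entropy (A : ℕ) (hA : 2 ≤ A) (α : Fin A → ℝ)
    (hα : ∀ i, 0 < α i) :
    ∫ x in solidSimplex A,
        (-(∑ i, simplexCoord A x i * Real.log (simplexCoord A x i))) *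
          ∏ j, simplexCoord A x j ^ (α j - 1)
      = ((∏ j, Real.Gamma (α j)) / Real.Gamma (∑ i, α i)) *
          (digamma ((∑ i, α i) + 1)
            - ∑ i, (α i / (∑ i, α i)) * digamma (α i + 1)) := by
  obtain ⟨n, rfl⟩ : ∃ n, A = n + 1 := ⟨A - 1, by omega⟩
  have hAsum : 0 < ∑ j, α j := Finset.sum_pos (fun j _ => hα j) Finset.univ_nonempty
  have hterm := fun i : Fin (n+1) => dirichlet_entropy_term n α hα i
  have hintegrand : ∀ x : Fin n → ℝ,
      (-(∑ i, simplexCoord (n+1) x i * Real.log (simplexCoord (n+1) x i))) *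
        ∏ j, simplexCoord (n+1) x j ^ (α j - 1)
      = ∑ i, -((simplexCoord (n+1) x i * Real.log (simplexCoord (n+1) x i)) *
          ∏ j, simplexCoord (n+1) x j ^ (α j - 1)) := by
    intro x
    rw [neg_mul, Finset.sum_mul, ← Finset.sum_neg_distrib]
  have main : ∫ x in mySimplex n,
      (-(∑ i, simplexCoord (n+1) x i * Real.log (simplexCoord (n+1) x i))) *
        ∏ j, simplexCoord (n+1) x j ^ (α j - 1)
      = ((∏ j, Real.Gamma (α j)) / Real.Gamma (∑ i, α i)) *
          (digamma ((∑ i, α i) + 1)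
            - ∑ i, (α i / (∑ i, α i)) * digamma (α i + 1)) := by
    simp_rw [hintegrand]
    rw [integral_finset_sum Finset.univ
      (f := fun (i : Fin (n+1)) (x : Fin n → ℝ) =>
        -(simplexCoord (n+1) x i * Real.log (simplexCoord (n+1) x i) *
          ∏ j, simplexCoord (n+1) x j ^ (α j - 1)))
      (fun i _ => ((hterm i).1.neg))]
    have hstep : ∀ i : Fin (n+1), (∫ x in mySimplex n,
        -((simplexCoord (n+1) x i * Real.log (simplexCoord (n+1) x i)) *
          ∏ j, simplexCoord (n+1) x j ^ (α j - 1)))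
        = (α i / (∑ j, α j)) * ((∏ j, Real.Gamma (α j)) / Real.Gamma (∑ j, α j)) *
            (digamma ((∑ j, α j) + 1) - digamma (α i + 1)) := by
      intro i
      rw [integral_neg, (hterm i).2]
      rw [Real.Gamma_add_one (hα i).ne', Real.Gamma_add_one hAsum.ne']
      rw [show α i * Real.Gamma (α i) * (∏ j ∈ Finset.univ.erase i, Real.Gamma (α j))
          = α i * ∏ j, Real.Gamma (α j) by
        rw [mul_assoc, Finset.mul_prod_erase Finset.univ
          (fun j => Real.Gamma (α j)) (Finset.mem_univ i)]]
      have hG : Real.Gamma (∑ j, α j) ≠ 0 := (Real.Gamma_pos_of_pos hAsum).ne'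
      field_simp
      ring
    rw [Finset.sum_congr rfl (fun i _ => hstep i)]
    have hsum1 : ∑ i : Fin (n+1), α i / (∑ j, α j) = 1 := by
      rw [← Finset.sum_div, div_self hAsum.ne']
    set P : ℝ := (∏ j, Real.Gamma (α j)) / Real.Gamma (∑ j, α j) with hP
    set D : ℝ := digamma ((∑ j, α j) + 1) with hD
    calc ∑ i : Fin (n+1), α i / (∑ j, α j) * P * (D - digamma (α i + 1))
        = ∑ i : Fin (n+1), ((α i / (∑ j, α j)) * (P * D)
            - P * ((α i / (∑ j, α j)) * digamma (α i + 1))) :=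
          Finset.sum_congr rfl fun i _ => by ring
      _ = (∑ i : Fin (n+1), α i / (∑ j, α j)) * (P * D)
            - P * ∑ i : Fin (n+1), (α i / (∑ j, α j)) * digamma (α i + 1) := by
          rw [Finset.sum_sub_distrib, Finset.sum_mul, Finset.mul_sum]
      _ = P * (D - ∑ i : Fin (n+1), (α i / (∑ j, α j)) * digamma (α i + 1)) := by
          rw [hsum1]; ring
  exact main
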